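/- Let D be a positive integer and G : ℂ⁶ → ℂ an entire function of the variables (ζ₁, ζ₂, ζ₃, ζ₁₂, ζ₁₃, ζ₂₃). Define the differential operator Δ_{3,D} by (Δ_{3,D}G) = D ∂₁₂G + 2ζ₁ ∂₁∂₁₂G + 2ζ₂ ∂₂∂₁₂G + ζ₃ ∂₁₃∂₂₃G + ζ₁₂(4 ∂₁∂₂G + ∂₁₂²G) + ζ₁₃(2 ∂₁∂₂₃G + ∂₁₂∂₁₃G) + ζ₂₃(2 ∂₂∂₁₃G + ∂₁₂∂₂₃G), where ∂₁, ∂₂, ∂₃, ∂₁₂, ∂₁₃, ∂₂₃ are the partial derivatives in the corresponding variables. Then for all z₁, z₂, z₃ ∈ ℂ^D, Σ_{j=1}^D (∂²/∂z_{1,j} ∂z_{2,j}) [ G(z₁·z₁, z₂·z₂, z₃·z₃, z₁·z₂, z₁·z₃, z₂·z₃) ] = (Δ_{3,D}G)(z₁·z₁, z₂·z₂, z₃·z₃, z₁·z₂, z₁·z₃, z₂·z₃). -/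

import Mathlib

noncomputable section

/-- Complex bilinear pairing `z·w = Σ_j z_j w_j` (no conjugation). -/
def cdot {D : ℕ} (z w : Fin D → ℂ) : ℂ := ∑ j, z j * w j

/-- Partial derivative in `ζ₁`. -/
def e1 (G : ℂ → ℂ → ℂ → ℂ → ℂ → ℂ → ℂ) : ℂ → ℂ → ℂ → ℂ → ℂ → ℂ → ℂ :=
  fun a b c p q s => deriv (fun t => G t b c p q s) a

/-- Partial derivative in `ζ₂`. -/
def e2 (G : ℂ → ℂ → ℂ → ℂ → ℂ → ℂ → ℂ) : ℂ → ℂ → ℂ → ℂ → ℂ → ℂ → ℂ :=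
  fun a b c p q s => deriv (fun t => G a t c p q s) b

/-- Partial derivative in `ζ₃`. -/
def e3 (G : ℂ → ℂ → ℂ → ℂ → ℂ → ℂ → ℂ) : ℂ → ℂ → ℂ → ℂ → ℂ → ℂ → ℂ :=
  fun a b c p q s => deriv (fun t => G a b t p q s) c

/-- Partial derivative in `ζ₁₂`. -/
def e12 (G : ℂ → ℂ → ℂ → ℂ → ℂ → ℂ → ℂ) : ℂ → ℂ → ℂ → ℂ → ℂ → ℂ → ℂ :=
  fun a b c p q s => deriv (fun t => G a b c t q s) p

/-- Partial derivative in `ζ₁₃`. -/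
def e13 (G : ℂ → ℂ → ℂ → ℂ → ℂ → ℂ → ℂ) : ℂ → ℂ → ℂ → ℂ → ℂ → ℂ → ℂ :=
  fun a b c p q s => deriv (fun t => G a b c p t s) q

/-- Partial derivative in `ζ₂₃`. -/
def e23 (G : ℂ → ℂ → ℂ → ℂ → ℂ → ℂ → ℂ) : ℂ → ℂ → ℂ → ℂ → ℂ → ℂ → ℂ :=
  fun a b c p q s => deriv (fun t => G a b c p q t) s

/-- The operator `Δ_{3,D}` of the paper:
`Δ_{3,D}G = D ∂₁₂G + 2ζ₁ ∂₁∂₁₂G + 2ζ₂ ∂₂∂₁₂G + ζ₃ ∂₁₃∂₂₃G + ζ₁₂(4∂₁∂₂G + ∂₁₂²G)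
 + ζ₁₃(2∂₁∂₂₃G + ∂₁₂∂₁₃G) + ζ₂₃(2∂₂∂₁₃G + ∂₁₂∂₂₃G)`. -/
def Delta3 (D : ℕ) (G : ℂ → ℂ → ℂ → ℂ → ℂ → ℂ → ℂ) :
    ℂ → ℂ → ℂ → ℂ → ℂ → ℂ → ℂ :=
  fun a b c p q s =>
    (D : ℂ) * e12 G a b c p q s
      + 2 * a * e1 (e12 G) a b c p q s
      + 2 * b * e2 (e12 G) a b c p q s
      + c * e13 (e23 G) a b c p q s
      + p * (4 * e1 (e2 G) a b c p q s + e12 (e12 G) a b c p q s)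
      + q * (2 * e1 (e23 G) a b c p q s + e12 (e13 G) a b c p q s)
      + s * (2 * e2 (e13 G) a b c p q s + e12 (e23 G) a b c p q s)

abbrev E6 : Type := ℂ × ℂ × ℂ × ℂ × ℂ × ℂ
def unc (G : ℂ → ℂ → ℂ → ℂ → ℂ → ℂ → ℂ) : E6 → ℂ :=
  fun v => G v.1 v.2.1 v.2.2.1 v.2.2.2.1 v.2.2.2.2.1 v.2.2.2.2.2

-- expansion of a CLM on E6
lemma clm_expand {F : Type*} [NormedAddCommGroup F] [NormedSpace ℂ F]
    (L : E6 →L[ℂ] F) (d1 d2 d3 d4 d5 d6 : ℂ) :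
    L (d1,d2,d3,d4,d5,d6) = d1 • L (1,0,0,0,0,0) + d2 • L (0,1,0,0,0,0) + d3 • L (0,0,1,0,0,0)
      + d4 • L (0,0,0,1,0,0) + d5 • L (0,0,0,0,1,0)
      + d6 • L (0,0,0,0,0,1) := by
  have h : ((d1,d2,d3,d4,d5,d6) : E6)
      = d1 • (1,0,0,0,0,0) + d2 • (0,1,0,0,0,0) + d3 • (0,0,1,0,0,0)
        + d4 • (0,0,0,1,0,0) + d5 • (0,0,0,0,1,0) + d6 • (0,0,0,0,0,1) := by
    simp [Prod.ext_iff]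
  conv_lhs => rw [h]
  simp only [map_add, map_smul]

lemma hasDerivAt_comp6 {H : E6 → ℂ} {v : E6} (hH : DifferentiableAt ℂ H v)
    {f1 f2 f3 f4 f5 f6 : ℂ → ℂ} {d1 d2 d3 d4 d5 d6 t : ℂ}
    (h1 : HasDerivAt f1 d1 t) (h2 : HasDerivAt f2 d2 t) (h3 : HasDerivAt f3 d3 t)
    (h4 : HasDerivAt f4 d4 t) (h5 : HasDerivAt f5 d5 t) (h6 : HasDerivAt f6 d6 t)
    (hv : (f1 t, f2 t, f3 t, f4 t, f5 t, f6 t) = v) :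
    HasDerivAt (fun u => H (f1 u, f2 u, f3 u, f4 u, f5 u, f6 u))
      (fderiv ℂ H v (d1,d2,d3,d4,d5,d6)) t := by
  subst hv
  have hγ : HasDerivAt (fun u => ((f1 u, f2 u, f3 u, f4 u, f5 u, f6 u) : E6))
      ((d1,d2,d3,d4,d5,d6) : E6) t := h1.prodMk (h2.prodMk (h3.prodMk (h4.prodMk (h5.prodMk h6))))
  exact hH.hasFDerivAt.comp_hasDerivAt t hγ

section
variable {G : ℂ → ℂ → ℂ → ℂ → ℂ → ℂ → ℂ}

lemma unc_diff (hG : AnalyticOnNhd ℂ (unc G) Set.univ) : Differentiable ℂ (unc G) :=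
  fun v => (hG v (Set.mem_univ v)).differentiableAt

lemma func_diff (hG : AnalyticOnNhd ℂ (unc G) Set.univ) :
    Differentiable ℂ (fderiv ℂ (unc G)) :=
  fun v => ((hG.fderiv) v (Set.mem_univ v)).differentiableAt

lemma hasFDerivAt_applyCLM (hG : AnalyticOnNhd ℂ (unc G) Set.univ) (u v : E6) :
    HasFDerivAt (fun w => fderiv ℂ (unc G) w u)
      ((ContinuousLinearMap.apply ℂ ℂ u).comp (fderiv ℂ (fderiv ℂ (unc G)) v)) v :=
  (ContinuousLinearMap.apply ℂ ℂ u).hasFDerivAt.comp v (func_diff hG v).hasFDerivAt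

lemma hasDerivAt_fderiv_comp6 (hG : AnalyticOnNhd ℂ (unc G) Set.univ) (u : E6) {v : E6}
    {f1 f2 f3 f4 f5 f6 : ℂ → ℂ} {d1 d2 d3 d4 d5 d6 t : ℂ}
    (h1 : HasDerivAt f1 d1 t) (h2 : HasDerivAt f2 d2 t) (h3 : HasDerivAt f3 d3 t)
    (h4 : HasDerivAt f4 d4 t) (h5 : HasDerivAt f5 d5 t) (h6 : HasDerivAt f6 d6 t)
    (hv : (f1 t, f2 t, f3 t, f4 t, f5 t, f6 t) = v) :
    HasDerivAt (fun x => fderiv ℂ (unc G) (f1 x, f2 x, f3 x, f4 x, f5 x, f6 x) u)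
      (fderiv ℂ (fderiv ℂ (unc G)) v (d1,d2,d3,d4,d5,d6) u) t := by
  subst hv
  have hγ : HasDerivAt (fun x => ((f1 x, f2 x, f3 x, f4 x, f5 x, f6 x) : E6))
      ((d1,d2,d3,d4,d5,d6) : E6) t := h1.prodMk (h2.prodMk (h3.prodMk (h4.prodMk (h5.prodMk h6))))
  have := (hasFDerivAt_applyCLM hG u _).comp_hasDerivAt t hγ
  exact this

lemma B_symm (hG : AnalyticOnNhd ℂ (unc G) Set.univ) (v x y : E6) :
    fderiv ℂ (fderiv ℂ (unc G)) v x y = fderiv ℂ (fderiv ℂ (unc G)) v y x :=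
  second_derivative_symmetric (fun w => ((unc_diff hG) w).hasFDerivAt)
    ((func_diff hG v).hasFDerivAt) x y

end

section PartialLemmas
variable {G : ℂ → ℂ → ℂ → ℂ → ℂ → ℂ → ℂ}

lemma e1_eq (hG : AnalyticOnNhd ℂ (unc G) Set.univ) (a b c p q s : ℂ) :
    e1 G a b c p q s = fderiv ℂ (unc G) (a,b,c,p,q,s) (1,0,0,0,0,0) :=
  (hasDerivAt_comp6 ((unc_diff hG) _) (hasDerivAt_id a) (hasDerivAt_const a b)
    (hasDerivAt_const a c) (hasDerivAt_const a p) (hasDerivAt_const a q)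
    (hasDerivAt_const a s) rfl).deriv

lemma e2_eq (hG : AnalyticOnNhd ℂ (unc G) Set.univ) (a b c p q s : ℂ) :
    e2 G a b c p q s = fderiv ℂ (unc G) (a,b,c,p,q,s) (0,1,0,0,0,0) :=
  (hasDerivAt_comp6 ((unc_diff hG) _) (hasDerivAt_const b a) (hasDerivAt_id b)
    (hasDerivAt_const b c) (hasDerivAt_const b p) (hasDerivAt_const b q)
    (hasDerivAt_const b s) rfl).deriv

lemma e12_eq (hG : AnalyticOnNhd ℂ (unc G) Set.univ) (a b c p q s : ℂ) :
    e12 G a b c p q s = fderiv ℂ (unc G) (a,b,c,p,q,s) (0,0,0,1,0,0) :=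
  (hasDerivAt_comp6 ((unc_diff hG) _) (hasDerivAt_const p a) (hasDerivAt_const p b)
    (hasDerivAt_const p c) (hasDerivAt_id p) (hasDerivAt_const p q)
    (hasDerivAt_const p s) rfl).deriv

lemma e13_eq (hG : AnalyticOnNhd ℂ (unc G) Set.univ) (a b c p q s : ℂ) :
    e13 G a b c p q s = fderiv ℂ (unc G) (a,b,c,p,q,s) (0,0,0,0,1,0) :=
  (hasDerivAt_comp6 ((unc_diff hG) _) (hasDerivAt_const q a) (hasDerivAt_const q b)
    (hasDerivAt_const q c) (hasDerivAt_const q p) (hasDerivAt_id q)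
    (hasDerivAt_const q s) rfl).deriv

lemma e23_eq (hG : AnalyticOnNhd ℂ (unc G) Set.univ) (a b c p q s : ℂ) :
    e23 G a b c p q s = fderiv ℂ (unc G) (a,b,c,p,q,s) (0,0,0,0,0,1) :=
  (hasDerivAt_comp6 ((unc_diff hG) _) (hasDerivAt_const s a) (hasDerivAt_const s b)
    (hasDerivAt_const s c) (hasDerivAt_const s p) (hasDerivAt_const s q)
    (hasDerivAt_id s) rfl).deriv

end PartialLemmas

section SecondOrder
variable {G : ℂ → ℂ → ℂ → ℂ → ℂ → ℂ → ℂ}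

lemma e1_e12_eq (hG : AnalyticOnNhd ℂ (unc G) Set.univ) (a b c p q s : ℂ) :
    e1 (e12 G) a b c p q s
      = fderiv ℂ (fderiv ℂ (unc G)) (a,b,c,p,q,s) (1,0,0,0,0,0) (0,0,0,1,0,0) := by
  have heq : (fun t => e12 G t b c p q s)
      = fun t => fderiv ℂ (unc G) (t,b,c,p,q,s) (0,0,0,1,0,0) :=
    funext fun t => e12_eq hG t b c p q s
  show deriv (fun t => e12 G t b c p q s) a = _
  rw [heq]
  exact (hasDerivAt_fderiv_comp6 hG _ (hasDerivAt_id a) (hasDerivAt_const a b) (hasDerivAt_const a c) (hasDerivAt_const a p) (hasDerivAt_const a q) (hasDerivAt_const a s) rfl).deriv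

lemma e2_e12_eq (hG : AnalyticOnNhd ℂ (unc G) Set.univ) (a b c p q s : ℂ) :
    e2 (e12 G) a b c p q s
      = fderiv ℂ (fderiv ℂ (unc G)) (a,b,c,p,q,s) (0,1,0,0,0,0) (0,0,0,1,0,0) := by
  have heq : (fun t => e12 G a t c p q s)
      = fun t => fderiv ℂ (unc G) (a,t,c,p,q,s) (0,0,0,1,0,0) :=
    funext fun t => e12_eq hG a t c p q s
  show deriv (fun t => e12 G a t c p q s) b = _
  rw [heq]
  exact (hasDerivAt_fderiv_comp6 hG _ (hasDerivAt_const b a) (hasDerivAt_id b) (hasDerivAt_const b c) (hasDerivAt_const b p) (hasDerivAt_const b q) (hasDerivAt_const b s) rfl).deriv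

lemma e13_e23_eq (hG : AnalyticOnNhd ℂ (unc G) Set.univ) (a b c p q s : ℂ) :
    e13 (e23 G) a b c p q s
      = fderiv ℂ (fderiv ℂ (unc G)) (a,b,c,p,q,s) (0,0,0,0,1,0) (0,0,0,0,0,1) := by
  have heq : (fun t => e23 G a b c p t s)
      = fun t => fderiv ℂ (unc G) (a,b,c,p,t,s) (0,0,0,0,0,1) :=
    funext fun t => e23_eq hG a b c p t s
  show deriv (fun t => e23 G a b c p t s) q = _
  rw [heq]
  exact (hasDerivAt_fderiv_comp6 hG _ (hasDerivAt_const q a) (hasDerivAt_const q b) (hasDerivAt_const q c) (hasDerivAt_const q p) (hasDerivAt_id q) (hasDerivAt_const q s) rfl).deriv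

lemma e1_e2_eq (hG : AnalyticOnNhd ℂ (unc G) Set.univ) (a b c p q s : ℂ) :
    e1 (e2 G) a b c p q s
      = fderiv ℂ (fderiv ℂ (unc G)) (a,b,c,p,q,s) (1,0,0,0,0,0) (0,1,0,0,0,0) := by
  have heq : (fun t => e2 G t b c p q s)
      = fun t => fderiv ℂ (unc G) (t,b,c,p,q,s) (0,1,0,0,0,0) :=
    funext fun t => e2_eq hG t b c p q s
  show deriv (fun t => e2 G t b c p q s) a = _
  rw [heq]
  exact (hasDerivAt_fderiv_comp6 hG _ (hasDerivAt_id a) (hasDerivAt_const a b) (hasDerivAt_const a c) (hasDerivAt_const a p) (hasDerivAt_const a q) (hasDerivAt_const a s) rfl).deriv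

lemma e12_e12_eq (hG : AnalyticOnNhd ℂ (unc G) Set.univ) (a b c p q s : ℂ) :
    e12 (e12 G) a b c p q s
      = fderiv ℂ (fderiv ℂ (unc G)) (a,b,c,p,q,s) (0,0,0,1,0,0) (0,0,0,1,0,0) := by
  have heq : (fun t => e12 G a b c t q s)
      = fun t => fderiv ℂ (unc G) (a,b,c,t,q,s) (0,0,0,1,0,0) :=
    funext fun t => e12_eq hG a b c t q s
  show deriv (fun t => e12 G a b c t q s) p = _
  rw [heq]
  exact (hasDerivAt_fderiv_comp6 hG _ (hasDerivAt_const p a) (hasDerivAt_const p b) (hasDerivAt_const p c) (hasDerivAt_id p) (hasDerivAt_const p q) (hasDerivAt_const p s) rfl).deriv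

lemma e1_e23_eq (hG : AnalyticOnNhd ℂ (unc G) Set.univ) (a b c p q s : ℂ) :
    e1 (e23 G) a b c p q s
      = fderiv ℂ (fderiv ℂ (unc G)) (a,b,c,p,q,s) (1,0,0,0,0,0) (0,0,0,0,0,1) := by
  have heq : (fun t => e23 G t b c p q s)
      = fun t => fderiv ℂ (unc G) (t,b,c,p,q,s) (0,0,0,0,0,1) :=
    funext fun t => e23_eq hG t b c p q s
  show deriv (fun t => e23 G t b c p q s) a = _
  rw [heq]
  exact (hasDerivAt_fderiv_comp6 hG _ (hasDerivAt_id a) (hasDerivAt_const a b) (hasDerivAt_const a c) (hasDerivAt_const a p) (hasDerivAt_const a q) (hasDerivAt_const a s) rfl).deriv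

lemma e12_e13_eq (hG : AnalyticOnNhd ℂ (unc G) Set.univ) (a b c p q s : ℂ) :
    e12 (e13 G) a b c p q s
      = fderiv ℂ (fderiv ℂ (unc G)) (a,b,c,p,q,s) (0,0,0,1,0,0) (0,0,0,0,1,0) := by
  have heq : (fun t => e13 G a b c t q s)
      = fun t => fderiv ℂ (unc G) (a,b,c,t,q,s) (0,0,0,0,1,0) :=
    funext fun t => e13_eq hG a b c t q s
  show deriv (fun t => e13 G a b c t q s) p = _
  rw [heq]
  exact (hasDerivAt_fderiv_comp6 hG _ (hasDerivAt_const p a) (hasDerivAt_const p b) (hasDerivAt_const p c) (hasDerivAt_id p) (hasDerivAt_const p q) (hasDerivAt_const p s) rfl).deriv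

lemma e2_e13_eq (hG : AnalyticOnNhd ℂ (unc G) Set.univ) (a b c p q s : ℂ) :
    e2 (e13 G) a b c p q s
      = fderiv ℂ (fderiv ℂ (unc G)) (a,b,c,p,q,s) (0,1,0,0,0,0) (0,0,0,0,1,0) := by
  have heq : (fun t => e13 G a t c p q s)
      = fun t => fderiv ℂ (unc G) (a,t,c,p,q,s) (0,0,0,0,1,0) :=
    funext fun t => e13_eq hG a t c p q s
  show deriv (fun t => e13 G a t c p q s) b = _
  rw [heq]
  exact (hasDerivAt_fderiv_comp6 hG _ (hasDerivAt_const b a) (hasDerivAt_id b) (hasDerivAt_const b c) (hasDerivAt_const b p) (hasDerivAt_const b q) (hasDerivAt_const b s) rfl).deriv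

lemma e12_e23_eq (hG : AnalyticOnNhd ℂ (unc G) Set.univ) (a b c p q s : ℂ) :
    e12 (e23 G) a b c p q s
      = fderiv ℂ (fderiv ℂ (unc G)) (a,b,c,p,q,s) (0,0,0,1,0,0) (0,0,0,0,0,1) := by
  have heq : (fun t => e23 G a b c t q s)
      = fun t => fderiv ℂ (unc G) (a,b,c,t,q,s) (0,0,0,0,0,1) :=
    funext fun t => e23_eq hG a b c t q s
  show deriv (fun t => e23 G a b c t q s) p = _
  rw [heq]
  exact (hasDerivAt_fderiv_comp6 hG _ (hasDerivAt_const p a) (hasDerivAt_const p b) (hasDerivAt_const p c) (hasDerivAt_id p) (hasDerivAt_const p q) (hasDerivAt_const p s) rfl).deriv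

end SecondOrder

lemma cdot_update_update {D : ℕ} (z w : Fin D → ℂ) (j : Fin D) (t s : ℂ) :
    cdot (Function.update z j t) (Function.update w j s) = cdot z w - z j * w j + t * s := by
  unfold cdot
  have h : ∀ k, Function.update z j t k * Function.update w j s k
      = Function.update (fun k => z k * w k) j (t * s) k := by
    intro k
    by_cases hk : k = j <;> simp [Function.update_apply, hk]
  simp_rw [h]
  rw [Finset.sum_update_of_mem (Finset.mem_univ j), Finset.sdiff_singleton_eq_erase,
    ← Finset.sum_erase_add Finset.univ (fun k => z k * w k) (Finset.mem_univ j)]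
  ring

lemma cdot_update_left {D : ℕ} (z w : Fin D → ℂ) (j : Fin D) (t : ℂ) :
    cdot (Function.update z j t) w = cdot z w - z j * w j + t * w j := by
  have := cdot_update_update z w j t (w j)
  rwa [Function.update_eq_self] at this

lemma cdot_eq_sum {D : ℕ} (z w : Fin D → ℂ) : ∑ j, z j * w j = cdot z w := rfl

section Key
variable {G : ℂ → ℂ → ℂ → ℂ → ℂ → ℂ → ℂ}

lemma key (hG : AnalyticOnNhd ℂ (unc G) Set.univ) (a b c p q r x y w : ℂ) :
    deriv (fun s => deriv (fun t =>
        G (a - x * x + t * t) (b - y * y + s * s) c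
          (p - x * y + t * s) (q - x * w + t * w) (r - y * w + s * w)) x) y
    = fderiv ℂ (unc G) (a,b,c,p,q,r) (0,0,0,1,0,0)
      + (x * y) * (4 * fderiv ℂ (fderiv ℂ (unc G)) (a,b,c,p,q,r) (0,1,0,0,0,0) (1,0,0,0,0,0)
          + fderiv ℂ (fderiv ℂ (unc G)) (a,b,c,p,q,r) (0,0,0,1,0,0) (0,0,0,1,0,0))
      + (x * x) * (2 * fderiv ℂ (fderiv ℂ (unc G)) (a,b,c,p,q,r) (0,0,0,1,0,0) (1,0,0,0,0,0))
      + (x * w) * (2 * fderiv ℂ (fderiv ℂ (unc G)) (a,b,c,p,q,r) (0,0,0,0,0,1) (1,0,0,0,0,0)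
          + fderiv ℂ (fderiv ℂ (unc G)) (a,b,c,p,q,r) (0,0,0,1,0,0) (0,0,0,0,1,0))
      + (y * y) * (2 * fderiv ℂ (fderiv ℂ (unc G)) (a,b,c,p,q,r) (0,1,0,0,0,0) (0,0,0,1,0,0))
      + (y * w) * (fderiv ℂ (fderiv ℂ (unc G)) (a,b,c,p,q,r) (0,0,0,0,0,1) (0,0,0,1,0,0)
          + 2 * fderiv ℂ (fderiv ℂ (unc G)) (a,b,c,p,q,r) (0,1,0,0,0,0) (0,0,0,0,1,0))
      + (w * w) * fderiv ℂ (fderiv ℂ (unc G)) (a,b,c,p,q,r) (0,0,0,0,0,1) (0,0,0,0,1,0) := by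
  have inner : ∀ s : ℂ, deriv (fun t =>
        G (a - x * x + t * t) (b - y * y + s * s) c
          (p - x * y + t * s) (q - x * w + t * w) (r - y * w + s * w)) x
      = (2*x) * fderiv ℂ (unc G) (a, b - y*y + s*s, c, p - x*y + x*s, q, r - y*w + s*w) (1,0,0,0,0,0)
        + s * fderiv ℂ (unc G) (a, b - y*y + s*s, c, p - x*y + x*s, q, r - y*w + s*w) (0,0,0,1,0,0)
        + w * fderiv ℂ (unc G) (a, b - y*y + s*s, c, p - x*y + x*s, q, r - y*w + s*w) (0,0,0,0,1,0) := by
    intro s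
    have h1 : HasDerivAt (fun t : ℂ => a - x * x + t * t) (2*x) x := by
      have : HasDerivAt (fun t : ℂ => a - x * x + t * t) (1 * x + x * 1) x :=
        ((hasDerivAt_id x).mul (hasDerivAt_id x)).const_add (a - x * x)
      convert this using 1
      ring
    have h4 : HasDerivAt (fun t : ℂ => p - x * y + t * s) s x := by
      have := ((hasDerivAt_id x).mul_const s).const_add (p - x * y)
      simpa using this
    have h5 : HasDerivAt (fun t : ℂ => q - x * w + t * w) w x := by
      have := ((hasDerivAt_id x).mul_const w).const_add (q - x * w)
      simpa using this
    have hv : ((a - x*x + x*x, b - y*y + s*s, c, p - x*y + x*s, q - x*w + x*w, r - y*w + s*w) : E6)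
        = (a, b - y*y + s*s, c, p - x*y + x*s, q, r - y*w + s*w) := by
      rw [sub_add_cancel, sub_add_cancel]
    have H := (hasDerivAt_comp6 ((unc_diff hG) _) h1
      (hasDerivAt_const x (b - y*y + s*s)) (hasDerivAt_const x c) h4 h5
      (hasDerivAt_const x (r - y*w + s*w)) hv).deriv
    rw [clm_expand] at H
    simp only [zero_smul, smul_eq_mul, zero_mul, add_zero, zero_add] at H
    exact H
  rw [funext inner]
  have hv2 : ((a, b - y*y + y*y, c, p - x*y + x*y, q, r - y*w + y*w) : E6)
      = (a, b, c, p, q, r) := by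
    rw [sub_add_cancel, sub_add_cancel, sub_add_cancel]
  have hb : HasDerivAt (fun s : ℂ => b - y * y + s * s) (2*y) y := by
    have : HasDerivAt (fun s : ℂ => b - y * y + s * s) (1 * y + y * 1) y :=
      ((hasDerivAt_id y).mul (hasDerivAt_id y)).const_add (b - y * y)
    convert this using 1
    ring
  have hp : HasDerivAt (fun s : ℂ => p - x * y + x * s) x y := by
    have := ((hasDerivAt_id y).const_mul x).const_add (p - x * y)
    simpa using this
  have hr : HasDerivAt (fun s : ℂ => r - y * w + s * w) w y := by
    have := ((hasDerivAt_id y).mul_const w).const_add (r - y * w)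
    simpa using this
  have h1' := hasDerivAt_fderiv_comp6 hG ((1,0,0,0,0,0) : E6)
    (hasDerivAt_const y a) hb (hasDerivAt_const y c) hp (hasDerivAt_const y q) hr hv2
  have h4' := hasDerivAt_fderiv_comp6 hG ((0,0,0,1,0,0) : E6)
    (hasDerivAt_const y a) hb (hasDerivAt_const y c) hp (hasDerivAt_const y q) hr hv2
  have h5' := hasDerivAt_fderiv_comp6 hG ((0,0,0,0,1,0) : E6)
    (hasDerivAt_const y a) hb (hasDerivAt_const y c) hp (hasDerivAt_const y q) hr hv2
  have hid : HasDerivAt (fun u : ℂ => u) 1 y := hasDerivAt_id y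
  have Htot := ((h1'.const_mul (2*x)).add (hid.mul h4')).add (h5'.const_mul w)
  refine Htot.deriv.trans ?_
  rw [hv2]
  rw [clm_expand (fderiv ℂ (fderiv ℂ (unc G)) (a,b,c,p,q,r)) 0 (2*y) 0 x 0 w]
  simp only [ContinuousLinearMap.add_apply, ContinuousLinearMap.smul_apply,
    zero_smul, smul_eq_mul, add_zero, zero_add, ContinuousLinearMap.zero_apply, id_eq]
  ring

end Key

/-- **`Σ_j ∂²/∂z_{1,j}∂z_{2,j} G(z₁·z₁, z₂·z₂, z₃·z₃, z₁·z₂, z₁·z₃, z₂·z₃)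
 = (Δ_{3,D}G)(z₁·z₁, z₂·z₂, z₃·z₃, z₁·z₂, z₁·z₃, z₂·z₃)`** for every entire
`G : ℂ⁶ → ℂ` and all `z₁, z₂, z₃ ∈ ℂ^D`. -/
theorem laplacian_triple_eq_Delta3 (D : ℕ) (hD : 0 < D)
    (G : ℂ → ℂ → ℂ → ℂ → ℂ → ℂ → ℂ)
    (hG : AnalyticOnNhd ℂ
      (fun v : ℂ × ℂ × ℂ × ℂ × ℂ × ℂ =>
        G v.1 v.2.1 v.2.2.1 v.2.2.2.1 v.2.2.2.2.1 v.2.2.2.2.2) Set.univ)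
    (z₁ z₂ z₃ : Fin D → ℂ) :
    (∑ j, deriv (fun s => deriv (fun t =>
        G (cdot (Function.update z₁ j t) (Function.update z₁ j t))
          (cdot (Function.update z₂ j s) (Function.update z₂ j s))
          (cdot z₃ z₃)
          (cdot (Function.update z₁ j t) (Function.update z₂ j s))
          (cdot (Function.update z₁ j t) z₃)
          (cdot (Function.update z₂ j s) z₃)) (z₁ j)) (z₂ j))
      = Delta3 D G (cdot z₁ z₁) (cdot z₂ z₂) (cdot z₃ z₃)
          (cdot z₁ z₂) (cdot z₁ z₃) (cdot z₂ z₃) := by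
  classical
  simp only [cdot_update_update]
  simp only [cdot_update_left]
  rw [Finset.sum_congr rfl (fun j _ => key hG (cdot z₁ z₁) (cdot z₂ z₂) (cdot z₃ z₃)
    (cdot z₁ z₂) (cdot z₁ z₃) (cdot z₂ z₃) (z₁ j) (z₂ j) (z₃ j))]
  simp only [Finset.sum_add_distrib, ← Finset.sum_mul, Finset.sum_const, Finset.card_univ,
    Fintype.card_fin, nsmul_eq_mul, cdot_eq_sum]
  simp only [Delta3]
  rw [e12_eq hG, e1_e12_eq hG, e2_e12_eq hG, e13_e23_eq hG, e1_e2_eq hG, e12_e12_eq hG,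
    e1_e23_eq hG, e12_e13_eq hG, e2_e13_eq hG, e12_e23_eq hG]
  rw [B_symm hG _ ((0,1,0,0,0,0) : E6) ((1,0,0,0,0,0) : E6),
    B_symm hG _ ((0,0,0,1,0,0) : E6) ((1,0,0,0,0,0) : E6),
    B_symm hG _ ((0,0,0,0,0,1) : E6) ((1,0,0,0,0,0) : E6),
    B_symm hG _ ((0,0,0,0,0,1) : E6) ((0,0,0,1,0,0) : E6),
    B_symm hG _ ((0,0,0,0,0,1) : E6) ((0,0,0,0,1,0) : E6)]
  ring
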